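/- arXiv:2605.22867 — 3 statements merged into one kernel-verified Lean document; each statement's English description precedes it below -/
import Mathlib

section
/- Suppose Γ is ω-clique regular with eigenvalues of its line graph L(Γ) equal to μ_1 ≤ ... ≤ μ_M. Then every eigenvalue λ of the ω-clique graph C_ω(Γ) satisfies (ω/(ω−1))(μ_1/2 − ω + 2) ≤ λ ≤ (ω/(ω−1))(μ_M/2 − ω + 2). -/
open SimpleGraph

/-- A graph is `ω`-clique regular if its edge set is nonempty and every edge lies in a
unique clique of order `ω`. -/
def IsCliqueRegular {V : Type*} (G : SimpleGraph V) (ω : ℕ) : Prop :=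
  G.edgeSet.Nonempty ∧
    ∀ ⦃x y : V⦄, G.Adj x y → ∃! s : Finset V, G.IsNClique ω s ∧ x ∈ s ∧ y ∈ s

/-- The `ω`-clique graph: vertices are the `ω`-cliques of `G`, two distinct cliques
adjacent iff they have nonempty intersection. -/
def cliqueGraph {V : Type*} [DecidableEq V] (G : SimpleGraph V) (ω : ℕ) :
    SimpleGraph {s : Finset V // G.IsNClique ω s} where
  Adj a b := a ≠ b ∧ (a.val ∩ b.val).Nonempty
  symm := ⟨fun a b => by
    rintro ⟨h1, h2⟩
    exact ⟨h1.symm, by rwa [Finset.inter_comm]⟩⟩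
  loopless := ⟨fun a => by simp⟩

instance {V : Type*} [DecidableEq V] (G : SimpleGraph V) (ω : ℕ) :
    DecidableRel (cliqueGraph G ω).Adj :=
  fun a b => inferInstanceAs (Decidable (a ≠ b ∧ (a.val ∩ b.val).Nonempty))

instance lineGraphAdjDecidable {V : Type*} [Fintype V] [DecidableEq V]
    (G : SimpleGraph V) : DecidableRel (G.lineGraph).Adj :=
  fun e f =>
    decidable_of_iff (e ≠ f ∧ ∃ v, v ∈ (e : Sym2 V) ∧ v ∈ (f : Sym2 V))
      (SimpleGraph.lineGraph_adj_iff_exists).symm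


open Matrix Finset

lemma exists_eigvec {n : Type*} [Fintype n] [DecidableEq n]
    {A : Matrix n n ℝ} {lam : ℝ} (h : lam ∈ spectrum ℝ A) :
    ∃ x : n → ℝ, x ≠ 0 ∧ A.mulVec x = lam • x := by
  rw [spectrum.mem_iff, Matrix.isUnit_iff_isUnit_det, isUnit_iff_ne_zero, not_not] at h
  obtain ⟨x, hx0, hx⟩ := (Matrix.exists_mulVec_eq_zero_iff).mpr h
  refine ⟨x, hx0, ?_⟩
  have := hx
  rw [sub_mulVec] at this
  have h2 : (algebraMap ℝ (Matrix n n ℝ) lam).mulVec x = lam • x := by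
    simp [Algebra.algebraMap_eq_smul_one, Matrix.smul_mulVec]
  have := sub_eq_zero.mp this
  rw [h2] at this
  exact this.symm

lemma quad_le_max {n : Type*} [Fintype n] [DecidableEq n]
    {A : Matrix n n ℝ} (hA : A.IsHermitian) {μ : ℝ}
    (hmax : ∀ t ∈ spectrum ℝ A, t ≤ μ) (x : n → ℝ) :
    x ⬝ᵥ A.mulVec x ≤ μ * (x ⬝ᵥ x) := by
  set P : Matrix n n ℝ := μ • (1 : Matrix n n ℝ) - A with hP
  have hPh : P.IsHermitian := by
    show Pᴴ = P
    rw [hP, Matrix.conjTranspose_sub, Matrix.conjTranspose_smul, Matrix.conjTranspose_one,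
      hA.eq]
    norm_num
  have hPsd : P.PosSemidef := by
    apply (Matrix.IsHermitian.posSemidef_iff_eigenvalues_nonneg hPh).mpr
    intro i
    show 0 ≤ hPh.eigenvalues i
    have hmem := hPh.eigenvalues_mem_spectrum_real i
    set t := hPh.eigenvalues i
    have : μ - t ∈ spectrum ℝ A := by
      rw [spectrum.mem_iff] at hmem ⊢
      intro hu
      apply hmem
      have : algebraMap ℝ (Matrix n n ℝ) t - P = -(algebraMap ℝ (Matrix n n ℝ) (μ - t) - A) := by
        simp only [Algebra.algebraMap_eq_smul_one, hP, sub_smul]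
        abel
      rw [this]
      exact hu.neg
    linarith [hmax _ this]
  have := hPsd.dotProduct_mulVec_nonneg x
  rw [star_trivial] at this
  have he : x ⬝ᵥ P.mulVec x = μ * (x ⬝ᵥ x) - x ⬝ᵥ A.mulVec x := by
    rw [hP, sub_mulVec, dotProduct_sub, smul_mulVec, one_mulVec, dotProduct_smul,
      smul_eq_mul]
  rw [he] at this
  linarith

lemma quad_ge_min {n : Type*} [Fintype n] [DecidableEq n]
    {A : Matrix n n ℝ} (hA : A.IsHermitian) {μ : ℝ}
    (hmin : ∀ t ∈ spectrum ℝ A, μ ≤ t) (x : n → ℝ) :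
    μ * (x ⬝ᵥ x) ≤ x ⬝ᵥ A.mulVec x := by
  have h := quad_le_max hA.neg (μ := -μ) ?_ x
  · rw [Matrix.neg_mulVec, dotProduct_neg] at h
    linarith
  · intro t ht
    have h2 : -t ∈ spectrum ℝ A := by
      rw [← spectrum.neg_eq] at ht
      exact Set.mem_neg.mp ht
    linarith [hmin _ h2]

section Mats
variable {V : Type*} [Fintype V] [DecidableEq V] (G : SimpleGraph V) [DecidableRel G.Adj] (ω : ℕ)

def nMat : Matrix {s : Finset V // G.IsNClique ω s} G.edgeSet ℝ :=
  fun C e => if (e : Sym2 V) ∈ (C : Finset V).sym2 then 1 else 0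

def bMat : Matrix G.edgeSet V ℝ := fun e v => if v ∈ (e : Sym2 V) then 1 else 0

def mMat : Matrix {s : Finset V // G.IsNClique ω s} V ℝ :=
  fun C v => if v ∈ (C : Finset V) then 1 else 0

variable {G ω}

lemma filter_mem_edge (e : G.edgeSet) :
    ∃ x y : V, x ≠ y ∧ (e : Sym2 V) = s(x, y) ∧
      Finset.univ.filter (fun v => v ∈ (e : Sym2 V)) = {x, y} := by
  obtain ⟨e, he⟩ := e
  induction e with | _ x y =>
  refine ⟨x, y, G.ne_of_adj (G.mem_edgeSet.mp he), rfl, ?_⟩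
  ext v
  simp [Sym2.mem_iff]

lemma sum_ind_mul {α : Type*} [Fintype α] (P Q : α → Prop) [DecidablePred P]
    [DecidablePred Q] :
    ∑ a : α, (if P a then (1:ℝ) else 0) * (if Q a then (1:ℝ) else 0) =
      ((Finset.univ.filter fun a => P a ∧ Q a).card : ℝ) := by
  rw [← Finset.sum_boole]
  congr 1
  ext a
  by_cases h1 : P a <;> by_cases h2 : Q a <;> simp [h1, h2]

/-- each edge has exactly two endpoints -/
lemma sum_endpoints (e : G.edgeSet) :
    ∑ v : V, (if v ∈ (e : Sym2 V) then (1:ℝ) else 0) = 2 := by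
  obtain ⟨x, y, hxy, -, hf⟩ := filter_mem_edge e
  rw [Finset.sum_boole, hf]
  rw [Finset.card_insert_of_notMem (by simp [hxy]), Finset.card_singleton]
  norm_num

lemma bb_eq : bMat G * (bMat G)ᵀ =
    (G.lineGraph).adjMatrix ℝ + (2:ℝ) • (1 : Matrix G.edgeSet G.edgeSet ℝ) := by
  ext e f
  rw [Matrix.mul_apply]
  simp only [bMat, Matrix.transpose_apply]
  rw [sum_ind_mul]
  by_cases hef : e = f
  · subst hef
    obtain ⟨x, y, hxy, he, hf⟩ := filter_mem_edge e
    have : (Finset.univ.filter fun v => v ∈ (e : Sym2 V) ∧ v ∈ (e : Sym2 V)) = {x, y} := by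
      rw [← hf]; congr 1; ext v; simp
    rw [this, Finset.card_insert_of_notMem (by simp [hxy]), Finset.card_singleton]
    simp [Matrix.add_apply, Matrix.smul_apply, Matrix.one_apply, SimpleGraph.irrefl]
  · by_cases hadj : (G.lineGraph).Adj e f
    · obtain ⟨-, v, hv1, hv2⟩ := SimpleGraph.lineGraph_adj_iff_exists.mp hadj
      have : (Finset.univ.filter fun w => w ∈ (e : Sym2 V) ∧ w ∈ (f : Sym2 V)) = {v} := by
        ext w
        simp only [Finset.mem_filter, Finset.mem_univ, true_and, Finset.mem_singleton]
        constructor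
        · rintro ⟨hw1, hw2⟩
          by_contra hwv
          exact hef (Subtype.ext (Sym2.eq_of_ne_mem hwv hw1 hv1 hw2 hv2))
        · rintro rfl; exact ⟨hv1, hv2⟩
      rw [this]
      simp [Matrix.add_apply, Matrix.smul_apply, Matrix.one_apply, hadj, hef]
    · have : (Finset.univ.filter fun w => w ∈ (e : Sym2 V) ∧ w ∈ (f : Sym2 V)) = ∅ := by
        ext w
        simp only [Finset.mem_filter, Finset.mem_univ, true_and, Finset.notMem_empty,
          iff_false, not_and]
        intro hw1 hw2
        exact hadj (SimpleGraph.lineGraph_adj_iff_exists.mpr ⟨hef, w, hw1, hw2⟩)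
      rw [this]
      simp [Matrix.add_apply, Matrix.smul_apply, Matrix.one_apply, hadj, hef]

lemma card_clique_edges_through (C : {s : Finset V // G.IsNClique ω s}) {v : V}
    (hv : v ∈ (C : Finset V)) :
    ((Finset.univ.filter fun e : G.edgeSet =>
        (e : Sym2 V) ∈ (C : Finset V).sym2 ∧ v ∈ (e : Sym2 V)).card : ℝ) = (ω : ℝ) - 1 := by
  have hcard : (Finset.univ.filter fun e : G.edgeSet =>
      (e : Sym2 V) ∈ (C : Finset V).sym2 ∧ v ∈ (e : Sym2 V)).card
      = ((C : Finset V).erase v).card := by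
    apply Finset.card_bij
      (fun e he => Sym2.Mem.other' ((Finset.mem_filter.mp he).2.2))
    · intro e he
      obtain ⟨-, h1, h2⟩ := Finset.mem_filter.mp he
      apply Finset.mem_erase.mpr
      constructor
      · have hd := G.not_isDiag_of_mem_edgeSet e.prop
        have := Sym2.other_ne hd h2
        rwa [Sym2.other_eq_other'] at this
      · exact Finset.mem_sym2_iff.mp h1 _ (Sym2.other_mem' h2)
    · intro e he f hf heq
      apply Subtype.ext
      have h1 := Sym2.other_spec' ((Finset.mem_filter.mp he).2.2)
      have h2 := Sym2.other_spec' ((Finset.mem_filter.mp hf).2.2)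
      rw [← h1, ← h2, heq]
    · intro w hw
      obtain ⟨hwv, hwC⟩ := Finset.mem_erase.mp hw
      have hadj : G.Adj v w := C.prop.1 hv hwC (Ne.symm hwv)
      refine ⟨⟨s(v, w), G.mem_edgeSet.mpr hadj⟩, ?_, ?_⟩
      · apply Finset.mem_filter.mpr
        refine ⟨Finset.mem_univ _, ?_, ?_⟩
        · exact Finset.mk_mem_sym2_iff.mpr ⟨hv, hwC⟩
        · exact Sym2.mem_mk_left _ _
      · have hs := Sym2.other_spec' (z := s(v, w)) (Sym2.mem_mk_left v w)
        exact (Sym2.congr_right.mp hs)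
  rw [hcard, Finset.card_erase_of_mem hv, C.prop.2]
  have h1 : 1 ≤ ω := by
    rw [← C.prop.2]
    exact Finset.card_pos.mpr ⟨v, hv⟩
  push_cast [Nat.cast_sub h1]
  ring

lemma nb_eq : nMat G ω * bMat G = ((ω : ℝ) - 1) • mMat G ω := by
  ext C v
  rw [Matrix.mul_apply]
  simp only [nMat, bMat]
  rw [sum_ind_mul]
  simp only [Matrix.smul_apply, mMat, smul_eq_mul]
  by_cases hv : v ∈ (C : Finset V)
  · rw [if_pos hv, mul_one, card_clique_edges_through C hv]
  · rw [if_neg hv, mul_zero]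
    rw [Nat.cast_eq_zero, Finset.card_eq_zero]
    rw [Finset.filter_false_of_mem]
    intro e he
    simp only [not_and, Finset.mem_sym2_iff]
    intro h1 h2
    exact hv (h1 v h2)

lemma inter_card_le_one (hcr : IsCliqueRegular G ω)
    {C D : {s : Finset V // G.IsNClique ω s}} (hCD : C ≠ D) :
    ((C : Finset V) ∩ (D : Finset V)).card ≤ 1 := by
  by_contra h
  push_neg at h
  obtain ⟨a, ha, b, hb, hab⟩ := Finset.one_lt_card.mp h
  obtain ⟨haC, haD⟩ := Finset.mem_inter.mp ha
  obtain ⟨hbC, hbD⟩ := Finset.mem_inter.mp hb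
  have hadj : G.Adj a b := C.prop.1 haC hbC hab
  obtain ⟨s, -, huniq⟩ := hcr.2 hadj
  exact hCD (Subtype.ext ((huniq _ ⟨C.prop, haC, hbC⟩).trans
    (huniq _ ⟨D.prop, haD, hbD⟩).symm))

lemma mm_eq (hcr : IsCliqueRegular G ω) :
    mMat G ω * (mMat G ω)ᵀ =
      (cliqueGraph G ω).adjMatrix ℝ + (ω : ℝ) • 1 := by
  ext C D
  rw [Matrix.mul_apply]
  simp only [mMat, Matrix.transpose_apply]
  rw [sum_ind_mul]
  have hfil : (Finset.univ.filter fun v => v ∈ (C : Finset V) ∧ v ∈ (D : Finset V))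
      = (C : Finset V) ∩ (D : Finset V) := by
    ext v; simp
  rw [hfil]
  simp only [Matrix.add_apply, SimpleGraph.adjMatrix_apply, Matrix.smul_apply,
    Matrix.one_apply, smul_eq_mul]
  by_cases hCD : C = D
  · subst hCD
    rw [Finset.inter_self, C.prop.2]
    simp [cliqueGraph]
  · have hle := inter_card_le_one hcr hCD
    by_cases hadj : (cliqueGraph G ω).Adj C D
    · have hne := hadj.2
      have hpos := Finset.card_pos.mpr hne
      have h1 : ((C : Finset V) ∩ (D : Finset V)).card = 1 := by omega
      rw [h1]
      simp [hadj, hCD]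
    · have hempty : ((C : Finset V) ∩ (D : Finset V)) = ∅ := by
        rw [← Finset.not_nonempty_iff_eq_empty]
        intro hne
        exact hadj ⟨hCD, hne⟩
      rw [hempty]
      simp [hadj, hCD]

lemma sum_clique_edges (C : {s : Finset V // G.IsNClique ω s}) :
    ∑ e : G.edgeSet, (if (e : Sym2 V) ∈ (C : Finset V).sym2 then (1:ℝ) else 0)
      = (ω : ℝ) * ((ω : ℝ) - 1) / 2 := by
  have key : 2 * ∑ e : G.edgeSet, (if (e : Sym2 V) ∈ (C : Finset V).sym2 then (1:ℝ) else 0)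
      = (ω : ℝ) * ((ω : ℝ) - 1) := by
    calc 2 * ∑ e : G.edgeSet, (if (e : Sym2 V) ∈ (C : Finset V).sym2 then (1:ℝ) else 0)
        = ∑ e : G.edgeSet, (if (e : Sym2 V) ∈ (C : Finset V).sym2 then (1:ℝ) else 0) * 2 := by
          rw [Finset.mul_sum]; exact Finset.sum_congr rfl fun e _ => mul_comm _ _
      _ = ∑ e : G.edgeSet, ∑ v : V, (if (e : Sym2 V) ∈ (C : Finset V).sym2 then (1:ℝ) else 0)
            * (if v ∈ (e : Sym2 V) then (1:ℝ) else 0) := by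
          refine Finset.sum_congr rfl fun e _ => ?_
          rw [← Finset.mul_sum, sum_endpoints]
      _ = ∑ v : V, ∑ e : G.edgeSet, (if (e : Sym2 V) ∈ (C : Finset V).sym2 then (1:ℝ) else 0)
            * (if v ∈ (e : Sym2 V) then (1:ℝ) else 0) := Finset.sum_comm
      _ = ∑ v : V, (if v ∈ (C : Finset V) then ((ω : ℝ) - 1) else 0) := by
          refine Finset.sum_congr rfl fun v _ => ?_
          by_cases hv : v ∈ (C : Finset V)
          · rw [if_pos hv, sum_ind_mul, card_clique_edges_through C hv]
          · rw [if_neg hv, sum_ind_mul]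
            rw [Nat.cast_eq_zero, Finset.card_eq_zero]
            rw [Finset.filter_false_of_mem]
            intro e he
            simp only [not_and, Finset.mem_sym2_iff]
            intro h1 h2
            exact hv (h1 v h2)
      _ = (ω : ℝ) * ((ω : ℝ) - 1) := by
          rw [Finset.sum_ite_mem, Finset.univ_inter, Finset.sum_const, C.prop.2]
          simp [mul_comm]
  linarith

lemma nn_eq (hcr : IsCliqueRegular G ω) :
    nMat G ω * (nMat G ω)ᵀ = ((ω : ℝ) * ((ω : ℝ) - 1) / 2) • 1 := by
  ext C D
  rw [Matrix.mul_apply]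
  simp only [nMat, Matrix.transpose_apply, Matrix.smul_apply, Matrix.one_apply, smul_eq_mul]
  by_cases hCD : C = D
  · subst hCD
    simp only [eq_self_iff_true, if_true, mul_one]
    calc ∑ e : G.edgeSet, ((if (e : Sym2 V) ∈ (C : Finset V).sym2 then (1:ℝ) else 0)
          * (if (e : Sym2 V) ∈ (C : Finset V).sym2 then (1:ℝ) else 0))
        = ∑ e : G.edgeSet, (if (e : Sym2 V) ∈ (C : Finset V).sym2 then (1:ℝ) else 0) := by
          refine Finset.sum_congr rfl fun e _ => ?_
          by_cases h : (e : Sym2 V) ∈ (C : Finset V).sym2 <;> simp [h]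
      _ = (ω : ℝ) * ((ω : ℝ) - 1) / 2 := sum_clique_edges C
  · rw [if_neg hCD, mul_zero]
    rw [sum_ind_mul]
    rw [Nat.cast_eq_zero, Finset.card_eq_zero]
    rw [Finset.filter_false_of_mem]
    intro e he
    simp only [not_and, Finset.mem_sym2_iff]
    intro h1 h2
    obtain ⟨x, y, hxy, hexy, -⟩ := filter_mem_edge e
    have hxC : x ∈ (C : Finset V) := h1 x (by rw [hexy]; simp)
    have hyC : y ∈ (C : Finset V) := h1 y (by rw [hexy]; simp)
    have hxD : x ∈ (D : Finset V) := h2 x (by rw [hexy]; simp)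
    have hyD : y ∈ (D : Finset V) := h2 y (by rw [hexy]; simp)
    have hadj : G.Adj x y := C.prop.1 hxC hyC hxy
    obtain ⟨s, -, huniq⟩ := hcr.2 hadj
    exact hCD (Subtype.ext ((huniq _ ⟨C.prop, hxC, hyC⟩).trans
      (huniq _ ⟨D.prop, hxD, hyD⟩).symm))



end Mats

/-- Eigenvalue bounds for `C_ω(Γ)` in terms of the extreme eigenvalues of `L(Γ)`. -/
theorem stmt11 {V : Type*} [Fintype V] [DecidableEq V] (G : SimpleGraph V)
    [DecidableRel G.Adj] (ω : ℕ) (hcr : IsCliqueRegular G ω)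
    (μ₁ μM : ℝ)
    (h1mem : μ₁ ∈ spectrum ℝ ((G.lineGraph).adjMatrix ℝ))
    (h1min : ∀ μ ∈ spectrum ℝ ((G.lineGraph).adjMatrix ℝ), μ₁ ≤ μ)
    (hMmem : μM ∈ spectrum ℝ ((G.lineGraph).adjMatrix ℝ))
    (hMmax : ∀ μ ∈ spectrum ℝ ((G.lineGraph).adjMatrix ℝ), μ ≤ μM) :
    ∀ lam ∈ spectrum ℝ (((cliqueGraph G ω)).adjMatrix ℝ),
      ((ω : ℝ) / ((ω : ℝ) - 1)) * (μ₁ / 2 - (ω : ℝ) + 2) ≤ lam ∧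
        lam ≤ ((ω : ℝ) / ((ω : ℝ) - 1)) * (μM / 2 - (ω : ℝ) + 2) := by
  intro lam hlam
  set w : ℝ := (ω : ℝ) with hw
  -- ω ≥ 2
  have hω2 : (2 : ℝ) ≤ w := by
    obtain ⟨e, he⟩ := hcr.1
    induction e with | _ a b =>
    have hadj : G.Adj a b := G.mem_edgeSet.mp he
    obtain ⟨s, ⟨hs, has, hbs⟩, -⟩ := hcr.2 hadj
    have : 2 ≤ ω := by
      rw [← hs.2]
      exact Finset.one_lt_card.mpr ⟨a, has, b, hbs, G.ne_of_adj hadj⟩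
    rw [hw]
    exact_mod_cast this
  set N := nMat G ω with hN
  set AL := (G.lineGraph).adjMatrix ℝ with hAL
  set AC := (cliqueGraph G ω).adjMatrix ℝ with hAC
  -- the key matrix identity
  have hALeq : AL = bMat G * (bMat G)ᵀ - (2:ℝ) • 1 := by
    rw [bb_eq]; abel
  have key : N * AL * Nᵀ = ((w - 1) * (w - 1)) • AC + (w * (w - 1) * (w - 2)) • 1 := by
    have h1 : N * (bMat G * (bMat G)ᵀ) * Nᵀ
        = ((w - 1) * (w - 1)) • (mMat G ω * (mMat G ω)ᵀ) := by
      have hassoc : N * (bMat G * (bMat G)ᵀ) * Nᵀ = (N * bMat G) * (N * bMat G)ᵀ := by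
        rw [Matrix.transpose_mul]
        simp only [Matrix.mul_assoc]
      rw [hassoc, hN, nb_eq, Matrix.transpose_smul, Matrix.smul_mul, Matrix.mul_smul,
        smul_smul]
    rw [hALeq, Matrix.mul_sub, Matrix.sub_mul, Matrix.mul_smul, Matrix.mul_one,
      Matrix.smul_mul, h1, mm_eq hcr, nn_eq hcr]
    rw [smul_add, smul_smul, smul_smul, ← hAC]
    have hsc : (w - 1) * (w - 1) * w - 2 * (w * (w - 1) / 2) = w * (w - 1) * (w - 2) := by
      ring
    rw [sub_eq_iff_eq_add]
    rw [← hsc, sub_smul]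
    abel
  -- eigenvector
  obtain ⟨x, hx0, hx⟩ := exists_eigvec hlam
  have hS : 0 < x ⬝ᵥ x := by
    have h := Matrix.dotProduct_self_star_pos_iff (v := x)
    rw [star_trivial] at h
    exact h.mpr hx0
  set y : G.edgeSet → ℝ := Nᵀ.mulVec x with hy
  have hdot : ∀ M : Matrix {s : Finset V // G.IsNClique ω s} {s : Finset V // G.IsNClique ω s} ℝ,
      x ⬝ᵥ (M.mulVec x) = x ⬝ᵥ M.mulVec x := fun _ => rfl
  have hyy : y ⬝ᵥ y = (w * (w - 1) / 2) * (x ⬝ᵥ x) := by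
    have : y ⬝ᵥ y = x ⬝ᵥ (N * Nᵀ).mulVec x := by
      rw [hy, ← Matrix.mulVec_mulVec, Matrix.dotProduct_mulVec x N, ← Matrix.mulVec_transpose]
    rw [this, hN, nn_eq hcr, Matrix.smul_mulVec, Matrix.one_mulVec, dotProduct_smul,
      smul_eq_mul]
  have hyAy : y ⬝ᵥ AL.mulVec y
      = ((w - 1) * (w - 1) * lam + w * (w - 1) * (w - 2)) * (x ⬝ᵥ x) := by
    have step : y ⬝ᵥ AL.mulVec y = x ⬝ᵥ (N * AL * Nᵀ).mulVec x := by
      rw [hy, ← Matrix.mulVec_mulVec, ← Matrix.mulVec_mulVec,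
        Matrix.dotProduct_mulVec x N, ← Matrix.mulVec_transpose]
    rw [step, key]
    rw [Matrix.add_mulVec, Matrix.smul_mulVec, Matrix.smul_mulVec,
      Matrix.one_mulVec, hx, dotProduct_add, dotProduct_smul, dotProduct_smul,
      dotProduct_smul, smul_eq_mul, smul_eq_mul, smul_eq_mul]
    ring
  have hALh : AL.IsHermitian := by
    rw [Matrix.IsHermitian, Matrix.conjTranspose_eq_transpose_of_trivial, hAL,
      SimpleGraph.transpose_adjMatrix]
  have hub := quad_le_max hALh hMmax y
  have hlb := quad_ge_min hALh h1min y
  rw [hyy, hyAy] at hub hlb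
  have hwpos : (0:ℝ) < w - 1 := by linarith
  have hub' : (w - 1) * (w - 1) * lam + w * (w - 1) * (w - 2) ≤ μM * (w * (w - 1) / 2) := by
    nlinarith [hub, hS]
  have hlb' : μ₁ * (w * (w - 1) / 2) ≤ (w - 1) * (w - 1) * lam + w * (w - 1) * (w - 2) := by
    nlinarith [hlb, hS]
  constructor
  · rw [div_mul_eq_mul_div, div_le_iff₀ hwpos]
    nlinarith [hlb', hwpos]
  · rw [div_mul_eq_mul_div, le_div_iff₀ hwpos]
    nlinarith [hub', hwpos]
end

section
/- If Γ is ω-clique regular, then every eigenvalue λ of C_ω(Γ) satisfies −ω ≤ λ ≤ ω(Δ(Γ)/(ω−1) − 1), where Δ(Γ) is the maximum degree of Γ. -/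
open SimpleGraph

section Aux
open Matrix

variable {V : Type*} [Fintype V] [DecidableEq V] {G : SimpleGraph V} [DecidableRel G.Adj] {ω : ℕ}

/-- Two `ω`-cliques sharing two distinct vertices coincide. -/
lemma clique_eq_of_two_mem (hcr : IsCliqueRegular G ω)
    {s t : Finset V} (hs : G.IsNClique ω s) (ht : G.IsNClique ω t)
    {u v : V} (huv : u ≠ v) (hus : u ∈ s) (hvs : v ∈ s) (hut : u ∈ t) (hvt : v ∈ t) :
    s = t := by
  have hadj : G.Adj u v := hs.1 (Finset.mem_coe.2 hus) (Finset.mem_coe.2 hvs) huv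
  obtain ⟨w, -, hw⟩ := hcr.2 hadj
  rw [hw s ⟨hs, hus, hvs⟩, hw t ⟨ht, hut, hvt⟩]

lemma two_le_of_cliqueRegular (hcr : IsCliqueRegular G ω) : 2 ≤ ω := by
  obtain ⟨e, he⟩ := hcr.1
  induction e using Sym2.ind with
  | _ x y =>
    rw [SimpleGraph.mem_edgeSet] at he
    obtain ⟨s, ⟨hs, hx, hy⟩, -⟩ := hcr.2 he
    rw [← hs.2]
    exact Finset.one_lt_card.2 ⟨x, hx, y, hy, he.ne⟩

/-- The number of `ω`-cliques through a vertex `v`, times `ω - 1`, is at most `deg v`. -/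
lemma card_cliques_through (hcr : IsCliqueRegular G ω) (v : V) :
    (ω - 1) * (Finset.univ.filter
      fun t : {s : Finset V // G.IsNClique ω s} => v ∈ t.val).card ≤ G.degree v := by
  classical
  set F := Finset.univ.filter
      (fun t : {s : Finset V // G.IsNClique ω s} => v ∈ t.val) with hF
  have hcard : ∀ t ∈ F, (t.val.erase v).card = ω - 1 := by
    intro t ht
    rw [Finset.card_erase_of_mem (by simpa [hF] using ht), t.2.2]
  have hdisj : ∀ t ∈ F, ∀ t' ∈ F, t ≠ t' →
      Disjoint (t.val.erase v) (t'.val.erase v) := by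
    intro t ht t' ht' htt'
    rw [Finset.disjoint_left]
    intro u hu hu'
    have huv : u ≠ v := (Finset.mem_erase.1 hu).1
    exact htt' (Subtype.ext (clique_eq_of_two_mem hcr t.2 t'.2 huv
      (Finset.mem_of_mem_erase hu) (by simpa [hF] using ht)
      (Finset.mem_of_mem_erase hu') (by simpa [hF] using ht')))
  have hsub : F.biUnion (fun t => t.val.erase v) ⊆ G.neighborFinset v := by
    intro u hu
    obtain ⟨t, ht, hut⟩ := Finset.mem_biUnion.1 hu
    have hvt : v ∈ t.val := by simpa [hF] using ht
    rw [SimpleGraph.mem_neighborFinset]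
    exact t.2.1 (Finset.mem_coe.2 hvt) (Finset.mem_coe.2 (Finset.mem_of_mem_erase hut))
      (Ne.symm (Finset.mem_erase.1 hut).1)
  calc (ω - 1) * F.card = ∑ t ∈ F, (t.val.erase v).card := by
        rw [Finset.sum_congr rfl hcard, Finset.sum_const, smul_eq_mul, mul_comm]
    _ = (F.biUnion (fun t => t.val.erase v)).card := (Finset.card_biUnion hdisj).symm
    _ ≤ (G.neighborFinset v).card := Finset.card_le_card hsub
    _ = G.degree v := rfl

/-- Degree bound in the clique graph. -/
lemma degree_cliqueGraph_le (hcr : IsCliqueRegular G ω)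
    (s : {s : Finset V // G.IsNClique ω s}) :
    (((cliqueGraph G ω).degree s : ℝ)) ≤
      (ω : ℝ) * ((G.maxDegree : ℝ) / ((ω : ℝ) - 1) - 1) := by
  classical
  have hω : 2 ≤ ω := two_le_of_cliqueRegular hcr
  have hω1 : (0 : ℝ) < (ω : ℝ) - 1 := by
    have : (2 : ℝ) ≤ (ω : ℝ) := by exact_mod_cast hω
    linarith
  set F := fun v : V => Finset.univ.filter
      (fun t : {s : Finset V // G.IsNClique ω s} => v ∈ t.val) with hFdef
  have hsub : (cliqueGraph G ω).neighborFinset s ⊆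
      s.val.biUnion (fun v => (F v).erase s) := by
    intro t ht
    rw [SimpleGraph.mem_neighborFinset] at ht
    obtain ⟨hne, w, hw⟩ := ht
    rw [Finset.mem_inter] at hw
    exact Finset.mem_biUnion.2 ⟨w, hw.1, Finset.mem_erase.2 ⟨fun h => hne h.symm,
      by simp [hFdef, hw.2]⟩⟩
  have h1 : (cliqueGraph G ω).degree s ≤ ∑ v ∈ s.val, ((F v).erase s).card :=
    le_trans (Finset.card_le_card hsub) (Finset.card_biUnion_le)
  have hmem : ∀ v ∈ s.val, s ∈ F v := by
    intro v hv; simp [hFdef, hv]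
  have hcard : ∀ v ∈ s.val, (((F v).erase s).card : ℝ) = ((F v).card : ℝ) - 1 := by
    intro v hv
    rw [Finset.card_erase_of_mem (hmem v hv)]
    have : 1 ≤ (F v).card := Finset.card_pos.2 ⟨s, hmem v hv⟩
    push_cast [Nat.cast_sub this]
    ring
  have hFv : ∀ v : V, ((F v).card : ℝ) ≤ (G.maxDegree : ℝ) / ((ω : ℝ) - 1) := by
    intro v
    rw [le_div_iff₀ hω1]
    have h2 := card_cliques_through hcr v
    have h3 : G.degree v ≤ G.maxDegree := G.degree_le_maxDegree v
    have h4 : (ω - 1) * (F v).card ≤ G.maxDegree := le_trans h2 h3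
    have h5 : ((ω - 1 : ℕ) : ℝ) * ((F v).card : ℝ) ≤ (G.maxDegree : ℝ) := by
      exact_mod_cast h4
    rw [Nat.cast_sub (by omega)] at h5
    push_cast at h5 ⊢
    linarith
  calc (((cliqueGraph G ω).degree s : ℝ)) ≤ ∑ v ∈ s.val, (((F v).erase s).card : ℝ) := by
        exact_mod_cast h1
    _ = ∑ v ∈ s.val, (((F v).card : ℝ) - 1) := Finset.sum_congr rfl hcard
    _ ≤ ∑ v ∈ s.val, ((G.maxDegree : ℝ) / ((ω : ℝ) - 1) - 1) := by
        apply Finset.sum_le_sum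
        intro v hv
        linarith [hFv v]
    _ = (ω : ℝ) * ((G.maxDegree : ℝ) / ((ω : ℝ) - 1) - 1) := by
        rw [Finset.sum_const, s.2.2, nsmul_eq_mul]

/-- `A + ω • 1` is positive semidefinite. -/
lemma adjMatrix_add_smul_posSemidef (hcr : IsCliqueRegular G ω) :
    (((cliqueGraph G ω).adjMatrix ℝ) + (ω : ℝ) • 1).PosSemidef := by
  classical
  set B : Matrix {s : Finset V // G.IsNClique ω s} V ℝ :=
    fun s v => if v ∈ s.val then 1 else 0 with hB
  have key : ((cliqueGraph G ω).adjMatrix ℝ) + (ω : ℝ) • 1 = B * Bᴴ := by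
    ext s t
    have hBB : (B * Bᴴ) s t = ((s.val ∩ t.val).card : ℝ) := by
      rw [Matrix.mul_apply]
      have : ∀ v : V, B s v * (Bᴴ) v t = if v ∈ s.val ∩ t.val then (1:ℝ) else 0 := by
        intro v
        rw [Matrix.conjTranspose_apply]
        simp only [hB, Matrix.conjTranspose_apply, apply_ite star, star_one, star_zero,
          Finset.mem_inter]
        by_cases h1 : v ∈ s.val <;> by_cases h2 : v ∈ t.val <;> simp [h1, h2]
      rw [Finset.sum_congr rfl (fun v _ => this v), Finset.sum_ite_mem,
        Finset.univ_inter, Finset.sum_const, nsmul_eq_mul, mul_one]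
    rw [hBB]
    by_cases hst : s = t
    · subst hst
      simp [Finset.inter_self, s.2.2]
    · have hinter : ((s.val ∩ t.val).card : ℝ) = if (cliqueGraph G ω).Adj s t then 1 else 0 := by
        by_cases hne : (s.val ∩ t.val).Nonempty
        · have hadj : (cliqueGraph G ω).Adj s t := ⟨hst, hne⟩
          have hle : (s.val ∩ t.val).card ≤ 1 := by
            by_contra h
            push_neg at h
            obtain ⟨u, hu, w, hw, huw⟩ := Finset.one_lt_card.1 h
            rw [Finset.mem_inter] at hu hw
            exact hst (Subtype.ext (clique_eq_of_two_mem hcr s.2 t.2 huw hu.1 hw.1 hu.2 hw.2))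
          have hge : 1 ≤ (s.val ∩ t.val).card := Finset.card_pos.2 hne
          rw [le_antisymm hle hge]
          simp [hadj]
        · have hadj : ¬ (cliqueGraph G ω).Adj s t := fun h => hne h.2
          rw [Finset.not_nonempty_iff_eq_empty.1 hne]
          simp [hadj]
      rw [hinter]
      simp [SimpleGraph.adjMatrix, Matrix.one_apply_ne hst]
  rw [key]
  exact Matrix.posSemidef_self_mul_conjTranspose B

end Aux
open Matrix in

/-- If `Γ` is `ω`-clique regular, every eigenvalue `λ` of `C_ω(Γ)` satisfies
`−ω ≤ λ ≤ ω(Δ(Γ)/(ω−1) − 1)`. -/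
theorem stmt12 {V : Type*} [Fintype V] [DecidableEq V] (G : SimpleGraph V)
    [DecidableRel G.Adj] (ω : ℕ) (hcr : IsCliqueRegular G ω) :
    ∀ lam ∈ spectrum ℝ ((cliqueGraph G ω).adjMatrix ℝ),
      -(ω : ℝ) ≤ lam ∧
        lam ≤ (ω : ℝ) * ((G.maxDegree : ℝ) / ((ω : ℝ) - 1) - 1) := by
  classical
  intro lam hlam
  set n := {s : Finset V // G.IsNClique ω s}
  set A := (cliqueGraph G ω).adjMatrix ℝ with hA
  -- extract an eigenvector
  rw [← AlgEquiv.spectrum_eq (Matrix.toLinAlgEquiv' (R := ℝ) (n := n)) A,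
    ← Module.End.hasEigenvalue_iff_mem_spectrum] at hlam
  obtain ⟨v, hv⟩ := hlam.exists_hasEigenvector
  have hmv : A *ᵥ v = lam • v := by
    have h := hv.apply_eq_smul
    rwa [show ((Matrix.toLinAlgEquiv' A : Module.End ℝ (n → ℝ)) v) = A *ᵥ v from
      Matrix.toLinAlgEquiv'_apply A v] at h
  have hv0 : v ≠ 0 := hv.2
  constructor
  · -- lower bound via positive semidefiniteness
    have hpsd := adjMatrix_add_smul_posSemidef hcr
    have h0 := hpsd.dotProduct_mulVec_nonneg v
    have hdot : star v ⬝ᵥ ((A + (ω : ℝ) • 1) *ᵥ v) = (lam + ω) * (v ⬝ᵥ v) := by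
      rw [Matrix.add_mulVec, hmv, Matrix.smul_mulVec, Matrix.one_mulVec]
      simp [dotProduct_add, dotProduct_smul, smul_eq_mul]
      ring
    rw [hdot] at h0
    have hvv : 0 < v ⬝ᵥ v := by
      have hnn : 0 ≤ v ⬝ᵥ v := by
        simp only [dotProduct]
        exact Finset.sum_nonneg fun i _ => mul_self_nonneg _
      rcases lt_or_eq_of_le hnn with h | h
      · exact h
      · exact absurd (dotProduct_self_eq_zero.1 h.symm) hv0
    nlinarith
  · -- upper bound via max degree argument
    obtain ⟨j, hj⟩ : ∃ j, v j ≠ 0 := Function.ne_iff.1 hv0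
    obtain ⟨i, -, hi⟩ := Finset.exists_max_image Finset.univ (fun k => |v k|)
      ⟨j, Finset.mem_univ j⟩
    have hvi : 0 < |v i| := lt_of_lt_of_le (abs_pos.2 hj) (hi j (Finset.mem_univ j))
    have hrow : lam * v i = ∑ k, A i k * v k := by
      have := congrFun hmv i
      simpa [Matrix.mulVec, dotProduct, Pi.smul_apply, smul_eq_mul] using this.symm
    have hAent : ∀ k, A i k = if (cliqueGraph G ω).Adj i k then (1:ℝ) else 0 := by
      intro k; simp [hA, SimpleGraph.adjMatrix]
    have habs : |lam| * |v i| ≤ ((cliqueGraph G ω).degree i : ℝ) * |v i| := by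
      rw [← abs_mul, hrow]
      calc |∑ k, A i k * v k| ≤ ∑ k, |A i k * v k| := Finset.abs_sum_le_sum_abs _ _
        _ ≤ ∑ k, A i k * |v i| := by
            apply Finset.sum_le_sum
            intro k _
            rw [abs_mul, hAent k]
            by_cases h : (cliqueGraph G ω).Adj i k
            · simp only [h, if_true, abs_one, one_mul]
              exact hi k (Finset.mem_univ k)
            · simp [h]
        _ = (∑ k, A i k) * |v i| := by rw [Finset.sum_mul]
        _ = ((cliqueGraph G ω).degree i : ℝ) * |v i| := by
            congr 1
            simp only [hAent]
            rw [Finset.sum_boole]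
            congr 1
            rw [SimpleGraph.degree]
            congr 1
            ext k
            simp [SimpleGraph.neighborFinset]
    have hlamle : |lam| ≤ ((cliqueGraph G ω).degree i : ℝ) :=
      le_of_mul_le_mul_right (by linarith [habs]) hvi
    calc lam ≤ |lam| := le_abs_self lam
      _ ≤ ((cliqueGraph G ω).degree i : ℝ) := hlamle
      _ ≤ (ω : ℝ) * ((G.maxDegree : ℝ) / ((ω : ℝ) - 1) - 1) := degree_cliqueGraph_le hcr i
end

section
/- Let Γ be an srg(n,k,1,μ) regular clique assembly, let C_3(Γ) be its triangle graph, and fix a vertex v of C_3(Γ). Then there is no edge of C_3(Γ) between a vertex having 0 common neighbors with v and a vertex having 3 common neighbors with v (both non-adjacent to v). -/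
open SimpleGraph

/-- Uniqueness of the `3`-clique on an edge. -/
lemma tri_unique {V : Type*} {G : SimpleGraph V} (hcr : IsCliqueRegular G 3)
    {x y : V} (hxy : G.Adj x y) {s t : Finset V}
    (hs : G.IsNClique 3 s) (hxs : x ∈ s) (hys : y ∈ s)
    (ht : G.IsNClique 3 t) (hxt : x ∈ t) (hyt : y ∈ t) : s = t := by
  obtain ⟨u, -, hu⟩ := hcr.2 hxy
  rw [hu s ⟨hs, hxs, hys⟩, hu t ⟨ht, hxt, hyt⟩]

/-- If two triangles meeting `v` both pass through a common vertex `y ∉ v`, they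
are equal. -/
lemma key {V : Type*} [DecidableEq V] {G : SimpleGraph V} (hcr : IsCliqueRegular G 3)
    (v t₁ t₂ : {s : Finset V // G.IsNClique 3 s}) {y : V}
    (hy1 : y ∈ t₁.val) (hy2 : y ∈ t₂.val) (hyv : y ∉ v.val)
    (h1 : (v.val ∩ t₁.val).Nonempty) (h2 : (v.val ∩ t₂.val).Nonempty) : t₁ = t₂ := by
  obtain ⟨z₁, hz₁⟩ := h1
  obtain ⟨z₂, hz₂⟩ := h2
  rw [Finset.mem_inter] at hz₁ hz₂
  have hyz₁ : y ≠ z₁ := fun h => hyv (h ▸ hz₁.1)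
  have hyz₂ : y ≠ z₂ := fun h => hyv (h ▸ hz₂.1)
  have hadj₁ : G.Adj y z₁ := t₁.prop.1 hy1 hz₁.2 hyz₁
  have hadj₂ : G.Adj y z₂ := t₂.prop.1 hy2 hz₂.2 hyz₂
  by_cases hzz : z₁ = z₂
  · subst hzz
    exact Subtype.ext (tri_unique hcr hadj₁ t₁.prop hy1 hz₁.2 t₂.prop hy2 hz₂.2)
  · have hadjz : G.Adj z₁ z₂ := v.prop.1 hz₁.1 hz₂.1 hzz
    have hcl : G.IsNClique 3 {z₁, z₂, y} :=
      is3Clique_triple_iff.2 ⟨hadjz, hadj₁.symm, hadj₂.symm⟩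
    have : ({z₁, z₂, y} : Finset V) = v.val :=
      tri_unique hcr hadjz hcl (by simp) (by simp) v.prop hz₁.1 hz₂.1
    exact absurd (this ▸ (by simp : y ∈ ({z₁, z₂, y} : Finset V))) hyv

/-- For an `srg(n,k,1,μ)` (a regular clique assembly) and a fixed vertex `v` of the
triangle graph `C₃(Γ)`, there is no edge between a vertex (non-adjacent to `v`) having
`0` common neighbors with `v` and one having `3` common neighbors with `v`. -/
theorem stmt17 {V : Type*} [Fintype V] [DecidableEq V] (G : SimpleGraph V)
    [DecidableRel G.Adj] (n k μ : ℕ)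
    (hsrg : G.IsSRGWith n k 1 μ)
    (hcr : IsCliqueRegular G 3)
    (v a b : {s : Finset V // G.IsNClique 3 s})
    (hav : a ≠ v) (hbv : b ≠ v)
    (hanadj : ¬ (cliqueGraph G 3).Adj v a)
    (hbnadj : ¬ (cliqueGraph G 3).Adj v b)
    (ha0 : ((cliqueGraph G 3).neighborSet v ∩ (cliqueGraph G 3).neighborSet a).ncard = 0)
    (hb3 : ((cliqueGraph G 3).neighborSet v ∩ (cliqueGraph G 3).neighborSet b).ncard = 3) :
    ¬ (cliqueGraph G 3).Adj a b := by
  rintro ⟨hab, x, hx⟩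
  rw [Finset.mem_inter] at hx
  -- v and a are vertex-disjoint, likewise v and b
  have hva : (v.val ∩ a.val) = ∅ := by
    by_contra h
    exact hanadj ⟨hav.symm, Finset.nonempty_iff_ne_empty.2 h⟩
  have hvb : (v.val ∩ b.val) = ∅ := by
    by_contra h
    exact hbnadj ⟨hbv.symm, Finset.nonempty_iff_ne_empty.2 h⟩
  -- the common-neighbor set of v and a is empty
  have hSa : ((cliqueGraph G 3).neighborSet v ∩ (cliqueGraph G 3).neighborSet a) = ∅ :=
    (Set.ncard_eq_zero (Set.toFinite _)).mp ha0
  -- get three distinct common neighbors of v and b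
  obtain ⟨t₁, t₂, t₃, h12, h13, h23, hS⟩ := Set.ncard_eq_three.mp hb3
  -- for each such t, a vertex of t in b, not equal to x
  have main : ∀ t : {s : Finset V // G.IsNClique 3 s},
      t ∈ ((cliqueGraph G 3).neighborSet v ∩ (cliqueGraph G 3).neighborSet b) →
      ∃ y, y ∈ t.val ∧ y ∈ b.val ∧ y ≠ x := by
    rintro t ⟨⟨hvtne, hvt⟩, ⟨hbt, hbt'⟩⟩
    obtain ⟨y, hy⟩ := hbt'
    rw [Finset.mem_inter] at hy
    refine ⟨y, hy.2, hy.1, ?_⟩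
    intro hyx
    have hxt : x ∈ t.val := hyx ▸ hy.2
    -- then t would be a common neighbor of v and a
    have hta : t ≠ a := by
      rintro rfl
      obtain ⟨z, hz⟩ := hvt
      rw [Finset.mem_inter] at hz
      exact absurd (Finset.mem_inter.2 hz) (by rw [hva]; exact Finset.notMem_empty z)
    have : t ∈ ((cliqueGraph G 3).neighborSet v ∩ (cliqueGraph G 3).neighborSet a) :=
      ⟨⟨hvtne, hvt⟩, ⟨hta.symm, ⟨x, Finset.mem_inter.2 ⟨hx.1, hxt⟩⟩⟩⟩
    rw [hSa] at this
    exact this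
  have mem1 : t₁ ∈ ((cliqueGraph G 3).neighborSet v ∩ (cliqueGraph G 3).neighborSet b) := by
    rw [hS]; simp
  have mem2 : t₂ ∈ ((cliqueGraph G 3).neighborSet v ∩ (cliqueGraph G 3).neighborSet b) := by
    rw [hS]; simp
  have mem3 : t₃ ∈ ((cliqueGraph G 3).neighborSet v ∩ (cliqueGraph G 3).neighborSet b) := by
    rw [hS]; simp
  obtain ⟨y₁, hy₁t, hy₁b, hy₁x⟩ := main t₁ mem1
  obtain ⟨y₂, hy₂t, hy₂b, hy₂x⟩ := main t₂ mem2
  obtain ⟨y₃, hy₃t, hy₃b, hy₃x⟩ := main t₃ mem3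
  -- each yᵢ lies in b.val.erase x, a set of card 2
  have herase : (b.val.erase x).card = 2 := by
    rw [Finset.card_erase_of_mem hx.2, b.prop.2]
  have hy₁e : y₁ ∈ b.val.erase x := Finset.mem_erase.2 ⟨hy₁x, hy₁b⟩
  have hy₂e : y₂ ∈ b.val.erase x := Finset.mem_erase.2 ⟨hy₂x, hy₂b⟩
  have hy₃e : y₃ ∈ b.val.erase x := Finset.mem_erase.2 ⟨hy₃x, hy₃b⟩
  -- pigeonhole: two of the yᵢ coincide
  have pigeon : y₁ = y₂ ∨ y₁ = y₃ ∨ y₂ = y₃ := by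
    by_contra h
    push_neg at h
    obtain ⟨h12', h13', h23'⟩ := h
    have hsub : ({y₁, y₂, y₃} : Finset V) ⊆ b.val.erase x := by
      intro z hz
      simp only [Finset.mem_insert, Finset.mem_singleton] at hz
      rcases hz with rfl | rfl | rfl <;> assumption
    have : ({y₁, y₂, y₃} : Finset V).card = 3 := by
      rw [Finset.card_insert_of_notMem (by simp [h12', h13']),
        Finset.card_insert_of_notMem (by simp [h23']), Finset.card_singleton]
    have := Finset.card_le_card hsub
    omega
  -- derive contradiction using the key lemma
  have hnotv : ∀ y, y ∈ b.val → y ∉ v.val := by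
    intro y hy hyv
    exact absurd (Finset.mem_inter.2 ⟨hyv, hy⟩) (by rw [hvb]; exact Finset.notMem_empty y)
  obtain ⟨-, hvt₁⟩ := mem1.1
  obtain ⟨-, hvt₂⟩ := mem2.1
  obtain ⟨-, hvt₃⟩ := mem3.1
  rcases pigeon with h | h | h
  · exact h12 (key hcr v t₁ t₂ hy₁t (h ▸ hy₂t) (hnotv y₁ hy₁b) hvt₁ hvt₂)
  · exact h13 (key hcr v t₁ t₃ hy₁t (h ▸ hy₃t) (hnotv y₁ hy₁b) hvt₁ hvt₃)
  · exact h23 (key hcr v t₂ t₃ hy₂t (h ▸ hy₃t) (hnotv y₂ hy₂b) hvt₂ hvt₃)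
end
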